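/- Let A be a commutative unital Banach algebra, and let x, y ∈ A be quasinilpotent. If λ ∈ πℤ and cos(λ·1_A + x) = cos(λ·1_A + y), then x² = y². -/

import Mathlib

/-- The cosine of an element of a complex Banach algebra, defined by the usual power
series `cos x = ∑ (-1)^n x^(2n) / (2n)!`. -/
noncomputable def algCos {A : Type*} [NormedRing A] [NormedAlgebra ℂ A] [CompleteSpace A]
    (x : A) : A :=
  ∑' n : ℕ, (((-1 : ℂ) ^ n / ((2 * n).factorial : ℂ))) • x ^ (2 * n)

open Complex WeakDual

section Aux

variable {A : Type*} [NormedCommRing A] [NormedAlgebra ℂ A] [CompleteSpace A]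

/-- Tail of the exponential series: `∑ w^n / (n+m)!`. -/
noncomputable def expTail (m : ℕ) (w : A) : A :=
  ∑' n : ℕ, (((n + m).factorial : ℂ)⁻¹) • w ^ n

lemma expTail_summable (m : ℕ) (w : A) :
    Summable fun n : ℕ => (((n + m).factorial : ℂ)⁻¹) • w ^ n := by
  apply Summable.of_norm_bounded (NormedSpace.norm_expSeries_summable' (𝕂 := ℂ) w)
  intro n
  rw [norm_smul, norm_smul]
  have h1 : (n.factorial : ℝ) ≤ ((n + m).factorial : ℝ) := by
    exact_mod_cast Nat.factorial_le (Nat.le_add_right n m)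
  have h2 : (0 : ℝ) < (n.factorial : ℝ) := by positivity
  have : ‖(((n + m).factorial : ℂ))⁻¹‖ ≤ ‖((n.factorial : ℂ))⁻¹‖ := by
    rw [norm_inv, norm_inv, Complex.norm_natCast, Complex.norm_natCast]
    exact inv_anti₀ h2 h1
  exact mul_le_mul_of_nonneg_right this (norm_nonneg _)

lemma expTail_succ (m : ℕ) (w : A) :
    expTail m w = ((m.factorial : ℂ)⁻¹) • 1 + w * expTail (m + 1) w := by
  rw [expTail, Summable.tsum_eq_zero_add (expTail_summable m w)]
  congr 1
  · simp
  · rw [expTail, ← Summable.tsum_mul_left w (expTail_summable (m + 1) w)]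
    congr 1
    funext n
    have hnm : n + 1 + m = n + (m + 1) := by omega
    rw [hnm, pow_succ', mul_smul_comm]

lemma exp_sub_one (w : A) : NormedSpace.exp w - 1 = w * expTail 1 w := by
  have h0 : NormedSpace.exp w = expTail 0 w := by
    rw [NormedSpace.exp_eq_tsum ℂ, expTail]
    simp
  rw [h0, expTail_succ]
  simp

lemma char_eq_zero [Nontrivial A] (φ : characterSpace ℂ A) {a : A}
    (ha : spectralRadius ℂ a = 0) : φ a = 0 := by
  have hmem : φ a ∈ spectrum ℂ a := AlgHom.apply_mem_spectrum φ a
  have hle : (‖φ a‖₊ : ENNReal) ≤ spectralRadius ℂ a :=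
    le_iSup₂ (f := fun k (_ : k ∈ spectrum ℂ a) => (‖k‖₊ : ENNReal)) (φ a) hmem
  rw [ha] at hle
  simpa using hle

lemma isUnit_expTail_one (w : A) (hw : ∀ φ : characterSpace ℂ A, φ w = 0) :
    IsUnit (expTail 1 w) := by
  by_contra hn
  obtain ⟨φ, hφ⟩ := WeakDual.CharacterSpace.exists_apply_eq_zero hn
  rw [expTail_succ] at hφ
  simp only [map_add, map_mul, map_smul, map_one, hw φ, zero_mul, add_zero,
    Nat.factorial_one, Nat.cast_one, inv_one, one_smul, smul_eq_mul, mul_one] at hφ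
  exact one_ne_zero hφ

lemma algCos_eq (x : A) :
    algCos x = (2 : ℂ)⁻¹ • (NormedSpace.exp (I • x) + NormedSpace.exp (-(I • x))) := by
  have hs : ∀ z : A, HasSum (fun n : ℕ => ((n.factorial : ℂ)⁻¹) • z ^ n)
      (NormedSpace.exp z) := fun z => by
    rw [NormedSpace.exp_eq_tsum ℂ]
    exact (NormedSpace.expSeries_summable' (𝕂 := ℂ) z).hasSum
  set F : ℕ → A := fun n => ((2 : ℂ)⁻¹ * (((n.factorial : ℂ)⁻¹) * (I ^ n + (-I) ^ n))) • x ^ n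
    with hF
  have hf : HasSum F
      ((2 : ℂ)⁻¹ • (NormedSpace.exp (I • x) + NormedSpace.exp (-(I • x)))) := by
    have h := ((hs (I • x)).add (hs (-(I • x)))).const_smul ((2 : ℂ)⁻¹)
    have he : (fun n : ℕ => (2 : ℂ)⁻¹ • (((n.factorial : ℂ)⁻¹) • (I • x) ^ n
        + ((n.factorial : ℂ)⁻¹) • (-(I • x)) ^ n)) = F := by
      funext n
      rw [hF]
      have h1 : -(I • x) = (-I) • x := by rw [neg_smul]
      rw [h1, smul_pow, smul_pow, smul_smul, smul_smul, ← add_smul, smul_smul]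
      congr 1
      ring
    rwa [he] at h
  have hce : ∀ k : ℕ, F (2 * k) = ((-1 : ℂ) ^ k / ((2 * k).factorial : ℂ)) • x ^ (2 * k) := by
    intro k
    simp only [hF]
    have h1 : (I : ℂ) ^ (2 * k) = (-1 : ℂ) ^ k := by
      rw [pow_mul, Complex.I_sq]
    have h2 : (-I : ℂ) ^ (2 * k) = (-1 : ℂ) ^ k := by
      rw [pow_mul, neg_sq, Complex.I_sq]
    rw [h1, h2]
    congr 1
    have : ((2 * k).factorial : ℂ) ≠ 0 := by
      exact_mod_cast Nat.factorial_ne_zero (2 * k)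
    field_simp
    norm_num
  have hco : ∀ k : ℕ, F (2 * k + 1) = 0 := by
    intro k
    simp only [hF]
    have h1 : (-I : ℂ) ^ (2 * k + 1) = -(I ^ (2 * k + 1)) :=
      Odd.neg_pow ⟨k, by ring⟩ I
    rw [h1]
    simp
  have hsume : Summable (fun k : ℕ => ((-1 : ℂ) ^ k / ((2 * k).factorial : ℂ)) • x ^ (2 * k)) := by
    have hinj : Function.Injective (fun k : ℕ => 2 * k) := mul_right_injective₀ two_ne_zero
    have hb := (NormedSpace.norm_expSeries_summable' (𝕂 := ℂ) x).comp_injective hinj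
    apply Summable.of_norm_bounded hb
    intro k
    rw [norm_smul]
    apply le_of_eq
    show _ = ‖(((2 * k).factorial : ℂ)⁻¹) • x ^ (2 * k)‖
    rw [norm_smul]
    congr 1
    simp [norm_div]
  have heven : HasSum (fun k : ℕ => ((-1 : ℂ) ^ k / ((2 * k).factorial : ℂ)) • x ^ (2 * k))
      (algCos x) := hsume.hasSum
  have heven' : HasSum (fun k : ℕ => F (2 * k)) (algCos x) := by
    rw [funext hce]
    exact heven
  have hodd : HasSum (fun k : ℕ => F (2 * k + 1)) 0 := by
    rw [funext hco]
    exact hasSum_zero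
  have := heven'.even_add_odd hodd
  rw [add_zero] at this
  exact (hf.unique this).symm

end Aux

theorem stmt_7 {A : Type*} [NormedCommRing A] [NormedAlgebra ℂ A] [CompleteSpace A]
    (x y : A) (hx : spectralRadius ℂ x = 0) (hy : spectralRadius ℂ y = 0)
    (l : ℂ) (hl : ∃ k : ℤ, l = (Real.pi : ℂ) * k)
    (h : algCos (algebraMap ℂ A l + x) = algCos (algebraMap ℂ A l + y)) :
    x ^ 2 = y ^ 2 := by
  letI : NormedAlgebra ℚ A := .restrictScalars ℚ ℂ A
  rcases subsingleton_or_nontrivial A with hA | hA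
  · exact Subsingleton.elim _ _
  obtain ⟨k, rfl⟩ := hl
  have hφx : ∀ φ : characterSpace ℂ A, φ x = 0 := fun φ => char_eq_zero φ hx
  have hφy : ∀ φ : characterSpace ℂ A, φ y = 0 := fun φ => char_eq_zero φ hy
  set ε : ℂ := (-1 : ℂ) ^ k with hε
  have hεne : ε ≠ 0 := zpow_ne_zero k (by norm_num)
  have hεdef : Complex.exp (I * ((Real.pi : ℂ) * k)) = ε := by
    rw [show Complex.I * ((Real.pi : ℂ) * k) = (k : ℂ) * ((Real.pi : ℂ) * Complex.I) by ring,
      Complex.exp_int_mul, Complex.exp_pi_mul_I, hε]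
  have hεε : ε * ε = 1 := by
    rw [hε, ← mul_zpow]
    norm_num
  have hεinv : ε⁻¹ = ε := inv_eq_of_mul_eq_one_right hεε
  set u := NormedSpace.exp (I • x) with hu
  set v := NormedSpace.exp (I • y) with hv
  set u' := NormedSpace.exp (-(I • x)) with hu'
  set v' := NormedSpace.exp (-(I • y)) with hv'
  have expand : ∀ z : A, NormedSpace.exp (I • (algebraMap ℂ A ((Real.pi : ℂ) * k) + z))
      = algebraMap ℂ A ε * NormedSpace.exp (I • z) := by
    intro z
    rw [smul_add, show (I : ℂ) • (algebraMap ℂ A ((Real.pi : ℂ) * k))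
        = algebraMap ℂ A (I * ((Real.pi : ℂ) * k)) by
      rw [Algebra.smul_def, ← map_mul], NormedSpace.exp_add,
      ← NormedSpace.algebraMap_exp_comm, ← Complex.exp_eq_exp_ℂ, hεdef]
  have expand' : ∀ z : A, NormedSpace.exp (-(I • (algebraMap ℂ A ((Real.pi : ℂ) * k) + z)))
      = algebraMap ℂ A ε * NormedSpace.exp (-(I • z)) := by
    intro z
    rw [smul_add, show (I : ℂ) • (algebraMap ℂ A ((Real.pi : ℂ) * k))
        = algebraMap ℂ A (I * ((Real.pi : ℂ) * k)) by
      rw [Algebra.smul_def, ← map_mul], neg_add, NormedSpace.exp_add, ← map_neg,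
      ← NormedSpace.algebraMap_exp_comm, ← Complex.exp_eq_exp_ℂ, Complex.exp_neg, hεdef, hεinv]
  rw [algCos_eq, algCos_eq, expand x, expand y, expand' x, expand' y] at h
  have h2 : algebraMap ℂ A ε * u + algebraMap ℂ A ε * u'
      = algebraMap ℂ A ε * v + algebraMap ℂ A ε * v' := by
    have := smul_right_injective A (r := (2 : ℂ)⁻¹) (by norm_num) h
    exact this
  have hεunit : IsUnit (algebraMap ℂ A ε) :=
    (isUnit_iff_ne_zero.mpr hεne).map (algebraMap ℂ A)
  have hsum : u + u' = v + v' := by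
    apply hεunit.mul_left_cancel
    rw [mul_add, mul_add]
    exact h2
  have huu' : u * u' = 1 := by
    rw [hu, hu', ← NormedSpace.exp_add, add_neg_cancel, NormedSpace.exp_zero]
  have hvv' : v * v' = 1 := by
    rw [hv, hv', ← NormedSpace.exp_add, add_neg_cancel, NormedSpace.exp_zero]
  have key : (u * v - 1) * (u - v) = 0 := by
    linear_combination u * v * hsum - v * huu' + u * hvv'
  have huv : u * v = NormedSpace.exp (I • (x + y)) := by
    rw [hu, hv, ← NormedSpace.exp_add, smul_add]
  have husub : u - v = v * (NormedSpace.exp (I • (x - y)) - 1) := by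
    rw [mul_sub, mul_one, hv, hu, ← NormedSpace.exp_add, smul_sub]
    have harg : (I : ℂ) • y + ((I : ℂ) • x - (I : ℂ) • y) = (I : ℂ) • x := by abel
    rw [harg]
  have key2 : (NormedSpace.exp (I • (x + y)) - 1)
      * (v * (NormedSpace.exp (I • (x - y)) - 1)) = 0 := by
    rw [← huv, ← husub]
    exact key
  rw [exp_sub_one, exp_sub_one] at key2
  have hT1 : IsUnit (expTail 1 ((I : ℂ) • (x + y))) := by
    apply isUnit_expTail_one
    intro φ
    rw [map_smul, map_add, hφx φ, hφy φ]
    simp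
  have hT2 : IsUnit (expTail 1 ((I : ℂ) • (x - y))) := by
    apply isUnit_expTail_one
    intro φ
    rw [map_smul, map_sub, hφx φ, hφy φ]
    simp
  have hvu : IsUnit v := NormedSpace.isUnit_exp _
  have key3 : (((I : ℂ) • (x + y)) * ((I : ℂ) • (x - y)))
      * (expTail 1 ((I : ℂ) • (x + y)) * (v * expTail 1 ((I : ℂ) • (x - y)))) = 0 := by
    linear_combination key2
  have hzero : ((I : ℂ) • (x + y)) * ((I : ℂ) • (x - y)) = 0 :=
    ((hT1.mul (hvu.mul hT2)).mul_left_eq_zero).mp key3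
  have hfin : (x + y) * (x - y) = 0 := by
    rw [smul_mul_smul_comm, Complex.I_mul_I] at hzero
    simpa [neg_smul] using hzero
  linear_combination hfin
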